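/- Let a, b be real numbers with 0 < a ≤ b ≤ 1/2. Then for every p = (p₁,p₂,p₃,p₄) ∈ 𝒫(a,b) with p₁ > 0 and p₂ > 0, the strict inequality D_KL(p, p_E(a,b)) < B(a,b) holds. -/

import Mathlib

open Real

/-- Convexity transfer: if `0 ≤ c ≤ x ≤ d` then
`x log x + (c+d-x) log (c+d-x) ≤ c log c + d log d`. -/
lemma gconv_aux {c d x : ℝ} (hc : 0 ≤ c) (hcx : c ≤ x) (hxd : x ≤ d) :
    x * log x + (c + d - x) * log (c + d - x) ≤ c * log c + d * log d := by
  rcases eq_or_lt_of_le hcx with h | hcx'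
  · subst h
    have : c + d - c = d := by ring
    rw [this]
  rcases eq_or_lt_of_le hxd with h | hxd'
  · subst h
    have : c + x - x = c := by ring
    rw [this]
    linarith
  have hcd : c < d := lt_trans hcx' hxd'
  have hdc : (0:ℝ) < d - c := by linarith
  set lam : ℝ := (d - x) / (d - c) with hlam
  set mu : ℝ := (x - c) / (d - c) with hmu
  have hlam0 : 0 ≤ lam := div_nonneg (by linarith) (by linarith)
  have hmu0 : 0 ≤ mu := div_nonneg (by linarith) (by linarith)
  have hsum : lam + mu = 1 := by
    rw [hlam, hmu, ← add_div, show d - x + (x - c) = d - c by ring]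
    exact div_self hdc.ne'
  have hmemc : c ∈ Set.Ici (0:ℝ) := hc
  have hmemd : d ∈ Set.Ici (0:ℝ) := le_trans hc (le_of_lt hcd)
  have h1 := Real.convexOn_mul_log.2 hmemc hmemd hlam0 hmu0 hsum
  have h2 := Real.convexOn_mul_log.2 hmemc hmemd hmu0 hlam0 (by linarith)
  have ex : lam • c + mu • d = x := by
    rw [smul_eq_mul, smul_eq_mul, hlam, hmu, div_mul_eq_mul_div, div_mul_eq_mul_div, ← add_div, div_eq_iff hdc.ne']
    ring
  have ey : mu • c + lam • d = c + d - x := by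
    rw [smul_eq_mul, smul_eq_mul, hlam, hmu, div_mul_eq_mul_div, div_mul_eq_mul_div, ← add_div, div_eq_iff hdc.ne']
    ring
  rw [ex] at h1
  rw [ey] at h2
  simp only [smul_eq_mul] at h1 h2
  have hsum' : lam * (c * log c) + mu * (d * log d) + (mu * (c * log c) + lam * (d * log d))
      = (lam + mu) * (c * log c + d * log d) := by ring
  rw [hsum, one_mul] at hsum'
  linarith

/-- Key entropy inequality. -/
lemma key_ineq (a b t : ℝ) (ha : 0 < a) (hab : a ≤ b) (hb : b ≤ 1/2)
    (ht : 0 < t) (hta : t < a) :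
    t * log t + (a - t) * log (a - t) + (b - t) * log (b - t)
      + (1 - a - b + t) * log (1 - a - b + t)
    < a * log a + (b - a) * log (b - a) + (1 - b) * log (1 - b) := by
  have h1 : t * log t + (a - t) * log (a - t) < a * log a := by
    have lt1 : log t < log a := Real.log_lt_log ht hta
    have lt2 : log (a - t) < log a := Real.log_lt_log (by linarith) (by linarith)
    nlinarith [mul_lt_mul_of_pos_left lt1 ht,
      mul_lt_mul_of_pos_left lt2 (show (0:ℝ) < a - t by linarith)]
  have h2 : (b - t) * log (b - t) + (1 - a - b + t) * log (1 - a - b + t)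
      ≤ (b - a) * log (b - a) + (1 - b) * log (1 - b) := by
    have := gconv_aux (c := b - a) (d := 1 - b) (x := b - t)
      (by linarith) (by linarith) (by linarith)
    have e : b - a + (1 - b) - (b - t) = 1 - a - b + t := by ring
    rw [e] at this
    linarith
  linarith

theorem kl_upper_bound_strict (a b : ℝ) (ha : 0 < a) (hab : a ≤ b) (hb : b ≤ 1/2)
    (p₁ p₂ p₃ p₄ : ℝ)
    (hp₁ : 0 < p₁) (hp₂ : 0 < p₂) (hp₃ : 0 ≤ p₃) (hp₄ : 0 ≤ p₄)
    (hsum : p₁ + p₂ + p₃ + p₄ = 1)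
    (hma : p₁ + p₂ = a) (hmb : p₁ + p₃ = b) :
    p₁ * log (p₁ / (a * b)) + p₂ * log (p₂ / (a * (1 - b)))
      + p₃ * log (p₃ / ((1 - a) * b)) + p₄ * log (p₄ / ((1 - a) * (1 - b)))
    < a * log (1 / b) + (b - a) * log ((b - a) / ((1 - a) * b))
      + (1 - b) * log (1 / (1 - a)) := by
  have hb0 : 0 < b := lt_of_lt_of_le ha hab
  have ha1 : a < 1 := by linarith
  have hb1 : b < 1 := by linarith
  have h1a : 0 < 1 - a := by linarith
  have h1b : 0 < 1 - b := by linarith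
  have hp2e : p₂ = a - p₁ := by linarith
  have hp3e : p₃ = b - p₁ := by linarith
  have hp4e : p₄ = 1 - a - b + p₁ := by linarith
  subst hp2e hp3e hp4e
  have hta : p₁ < a := by linarith
  have htb : p₁ < b := lt_of_lt_of_le hta hab
  have hp3' : 0 < b - p₁ := by linarith
  have hp4' : 0 < 1 - a - b + p₁ := by
    have : a + b ≤ 1 := by linarith
    linarith
  -- expand the logs
  have l1 : log (p₁ / (a * b)) = log p₁ - log a - log b := by
    rw [Real.log_div hp₁.ne' (by positivity), Real.log_mul ha.ne' hb0.ne']; ring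
  have l2 : log ((a - p₁) / (a * (1 - b))) = log (a - p₁) - log a - log (1 - b) := by
    rw [Real.log_div (by linarith : a - p₁ ≠ 0) (by positivity),
      Real.log_mul ha.ne' h1b.ne']; ring
  have l3 : log ((b - p₁) / ((1 - a) * b)) = log (b - p₁) - log (1 - a) - log b := by
    rw [Real.log_div hp3'.ne' (by positivity), Real.log_mul h1a.ne' hb0.ne']; ring
  have l4 : log ((1 - a - b + p₁) / ((1 - a) * (1 - b)))
      = log (1 - a - b + p₁) - log (1 - a) - log (1 - b) := by
    rw [Real.log_div hp4'.ne' (by positivity), Real.log_mul h1a.ne' h1b.ne']; ring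
  have r1 : log (1 / b) = - log b := by rw [one_div, Real.log_inv]
  have r3 : log (1 / (1 - a)) = - log (1 - a) := by rw [one_div, Real.log_inv]
  have r2 : (b - a) * log ((b - a) / ((1 - a) * b))
      = (b - a) * log (b - a) - (b - a) * log (1 - a) - (b - a) * log b := by
    rcases eq_or_lt_of_le hab with h | h
    · subst h; simp
    · rw [Real.log_div (by linarith : b - a ≠ 0) (by positivity),
        Real.log_mul h1a.ne' hb0.ne']; ring
  rw [l1, l2, l3, l4, r1, r2, r3]
  have key := key_ineq a b p₁ ha hab hb hp₁ hta
  nlinarith [key]
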